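/- For every n ∈ ℙ, ∑_{β ∈ B_{2n}, fmaj(β) odd} (-1)^{ℓ_B(β)} q^{fmaj(β)} = 0; that is, the odd-degree part of the signed Mahonian polynomial of B_{2n} vanishes. -/

import Mathlib

open Finset Polynomial

/-- The hyperoctahedral group `B n`, modeled as pairs (permutation, sign vector):
the signed permutation with window `β(i) = ±(σ(i)+1)`. -/
abbrev Bgrp (n : ℕ) := Equiv.Perm (Fin n) × (Fin n → Bool)

/-- The window entry `β(i)` (a nonzero integer). -/
def wdw {n : ℕ} (β : Bgrp n) (i : Fin n) : ℤ :=
  (if β.2 i then -1 else 1) * ((β.1 i : ℤ) + 1)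

/-- Window entry at a `ℕ` position (0-based), `0` out of range. -/
def wdwN {n : ℕ} (β : Bgrp n) (i : ℕ) : ℤ :=
  if h : i < n then wdw β ⟨i, h⟩ else 0

/-- Number of inversions of the window. -/
def invB {n : ℕ} (β : Bgrp n) : ℕ :=
  ((univ : Finset (Fin n × Fin n)).filter
    (fun p => p.1 < p.2 ∧ wdw β p.2 < wdw β p.1)).card

/-- The set of positions with negative entries. -/
def NegB {n : ℕ} (β : Bgrp n) : Finset (Fin n) :=
  univ.filter (fun i => wdw β i < 0)

def N1 {n : ℕ} (β : Bgrp n) : ℕ := (NegB β).card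

def N2 {n : ℕ} (β : Bgrp n) : ℕ :=
  ((univ : Finset (Fin n × Fin n)).filter
    (fun p => p.1 < p.2 ∧ wdw β p.1 + wdw β p.2 < 0)).card

/-- The order `-1 ≺ -2 ≺ ⋯ ≺ -n ≺ 1 ≺ 2 ≺ ⋯ ≺ n` on nonzero integers. -/
def precLt (a b : ℤ) : Prop :=
  (a < 0 ∧ b < 0 ∧ b < a) ∨ (a < 0 ∧ 0 < b) ∨ (0 < a ∧ 0 < b ∧ a < b)

instance (a b : ℤ) : Decidable (precLt a b) := by unfold precLt; infer_instance

/-- Descent set of the window, with respect to `≺` (0-based positions). -/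
def DesB {n : ℕ} (β : Bgrp n) : Finset ℕ :=
  (range (n-1)).filter (fun i => precLt (wdwN β (i+1)) (wdwN β i))

/-- Major index: sum of the (1-based) descent positions. -/
def majB {n : ℕ} (β : Bgrp n) : ℕ := ∑ i ∈ DesB β, (i+1)

/-- Flag-major index. -/
def fmaj {n : ℕ} (β : Bgrp n) : ℕ := 2 * majB β + N1 β

/-- Group multiplication (composition of signed permutations). -/
def bmul {n : ℕ} (β γ : Bgrp n) : Bgrp n :=
  (β.1 * γ.1, fun i => xor (γ.2 i) (β.2 (γ.1 i)))

/-- The identity signed permutation. -/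
def bone (n : ℕ) : Bgrp n := (1, fun _ => false)

/-- The Coxeter generators `s_0, s_1, …, s_{n-1}` of `B n`. -/
def BGens (n : ℕ) : Set (Bgrp n) :=
  { b | (∃ h : 0 < n, b = ((1 : Equiv.Perm (Fin n)), fun j => decide (j = (⟨0, h⟩ : Fin n)))) ∨
        (∃ (i : ℕ) (h : i + 1 < n),
          b = (Equiv.swap ⟨i, Nat.lt_of_succ_lt h⟩ ⟨i+1, h⟩, fun _ => false)) }

/-- Minimal length of an expression of `β` as a product of the generators of `B n`. -/
noncomputable def lenB {n : ℕ} (β : Bgrp n) : ℕ :=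
  sInf {k | ∃ l : List (Bgrp n), l.length = k ∧ (∀ g ∈ l, g ∈ BGens n) ∧
    l.foldr bmul (bone n) = β}

/-- The Coxeter generators `s_0^D, s_1, …, s_{n-1}` of `D n`. -/
def DGens (n : ℕ) : Set (Bgrp n) :=
  { b | (∃ h : 1 < n,
          b = (Equiv.swap ⟨0, Nat.lt_of_succ_lt h⟩ ⟨1, h⟩, fun (j : Fin n) => decide ((j : ℕ) < 2))) ∨
        (∃ (i : ℕ) (h : i + 1 < n),
          b = (Equiv.swap ⟨i, Nat.lt_of_succ_lt h⟩ ⟨i+1, h⟩, fun _ => false)) }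

/-- Minimal length of an expression as a product of the generators of `D n`. -/
noncomputable def lenD {n : ℕ} (β : Bgrp n) : ℕ :=
  sInf {k | ∃ l : List (Bgrp n), l.length = k ∧ (∀ g ∈ l, g ∈ DGens n) ∧
    l.foldr bmul (bone n) = β}

/-- The even-signed permutation group `D n` as a finset of `B n`. -/
def Dgrp (n : ℕ) : Finset (Bgrp n) := univ.filter (fun γ => Even (N1 γ))

/-- `Δ_n = {γ ∈ B_n : γ(n) > 0}`. -/
def DeltaSet (n : ℕ) : Finset (Bgrp n) := univ.filter (fun γ => 0 < wdwN γ (n-1))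

/-- `|γ|_n`: replace the last window entry by its absolute value. -/
def absLast {n : ℕ} (γ : Bgrp n) : Bgrp n :=
  (γ.1, fun i => if (i : ℕ) = n - 1 then false else γ.2 i)

/-- The `D`-major index. -/
def Dmaj {n : ℕ} (γ : Bgrp n) : ℕ := fmaj (absLast γ)

/-- `-β`: negate all window entries. -/
def negB {n : ℕ} (β : Bgrp n) : Bgrp n := (β.1, fun i => !β.2 i)

/-- Number of inversions of a permutation of `Fin n`. -/
def invS {n : ℕ} (σ : Equiv.Perm (Fin n)) : ℕ :=
  ((univ : Finset (Fin n × Fin n)).filter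
    (fun p => p.1 < p.2 ∧ σ p.2 < σ p.1)).card

/-- Major index of a permutation of `Fin n` (usual order). -/
def majS {n : ℕ} (σ : Equiv.Perm (Fin n)) : ℕ :=
  ∑ i ∈ (range (n-1)).filter
      (fun i => ∀ h : i + 1 < n, σ ⟨i+1, h⟩ < σ ⟨i, Nat.lt_of_succ_lt h⟩), (i+1)

/-- The `q`-analogue `[m]_q = 1 + q + ⋯ + q^{m-1}`, evaluated at a polynomial `q`. -/
noncomputable def qpoly (m : ℕ) (q : Polynomial ℤ) : Polynomial ℤ := ∑ k ∈ range m, q ^ k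

namespace Stmt13Aux

open Equiv

variable {m : ℕ}

/-! ### Basic algebra of `bmul` -/

lemma bmul_assoc (a b c : Bgrp m) : bmul (bmul a b) c = bmul a (bmul b c) := by
  unfold bmul
  refine Prod.ext (mul_assoc _ _ _) ?_
  funext i
  simp [Equiv.Perm.mul_apply, Bool.xor_assoc]

lemma bone_bmul (a : Bgrp m) : bmul (bone m) a = a := by
  unfold bmul bone; cases a with
  | mk σ ε => simp

lemma bmul_bone (a : Bgrp m) : bmul a (bone m) = a := by
  unfold bmul bone; cases a with
  | mk σ ε => simp

lemma bmul_perm (π ρ : Equiv.Perm (Fin m)) :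
    bmul (π, fun _ => false) (ρ, fun _ => false) = (π * ρ, fun _ => false) := by
  unfold bmul; simp

/-! ### The sign character -/

def dSign (β : Bgrp m) : ℤ :=
  (Equiv.Perm.sign β.1 : ℤ) * ∏ i, (if β.2 i then (-1 : ℤ) else 1)

lemma dSign_bmul (β γ : Bgrp m) : dSign (bmul β γ) = dSign β * dSign γ := by
  unfold dSign bmul
  simp only [map_mul, Units.val_mul]
  push_cast
  rw [show (∏ i, (if (xor (γ.2 i) (β.2 (γ.1 i))) then (-1:ℤ) else 1))
      = ∏ i, ((if γ.2 i then (-1:ℤ) else 1) * (if β.2 (γ.1 i) then (-1:ℤ) else 1)) from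
    Finset.prod_congr rfl (fun i _ => by
      cases h1 : γ.2 i <;> cases h2 : β.2 (γ.1 i) <;> simp [h1, h2]),
    Finset.prod_mul_distrib, Equiv.prod_comp γ.1 (fun j => (if β.2 j then (-1:ℤ) else 1))]
  ring

lemma dSign_bone : dSign (bone m) = 1 := by
  unfold dSign bone; simp

lemma dSign_gen {g : Bgrp m} (hg : g ∈ BGens m) : dSign g = -1 := by
  rcases hg with ⟨h0, rfl⟩ | ⟨i, h, rfl⟩
  · unfold dSign
    simp only [map_one, Units.val_one, one_mul]
    have : ∀ j : Fin m, (if (decide (j = (⟨0, h0⟩ : Fin m))) then (-1:ℤ) else 1)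
        = (if j = (⟨0, h0⟩ : Fin m) then (-1:ℤ) else 1) := by
      intro j; by_cases hj : j = (⟨0, h0⟩ : Fin m) <;> simp [hj]
    rw [Finset.prod_congr rfl (fun j _ => this j), Finset.prod_ite_eq' Finset.univ _
      (fun _ => (-1:ℤ))]
    simp
  · unfold dSign
    have hne : (⟨i, Nat.lt_of_succ_lt h⟩ : Fin m) ≠ ⟨i+1, h⟩ := by
      intro hh; exact absurd (congrArg Fin.val hh) (by simp)
    simp [Equiv.Perm.sign_swap hne]

lemma dSign_foldr (l : List (Bgrp m)) (hl : ∀ g ∈ l, g ∈ BGens m) :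
    dSign (l.foldr bmul (bone m)) = (-1 : ℤ) ^ l.length := by
  induction l with
  | nil => simpa using dSign_bone
  | cons g l ih =>
    rw [List.foldr_cons, dSign_bmul, dSign_gen (hl g List.mem_cons_self),
      ih (fun x hx => hl x (List.mem_cons_of_mem g hx))]
    rw [List.length_cons, pow_succ]
    ring

/-! ### Generation by the Coxeter generators -/

def Wd (β : Bgrp m) : Prop :=
  ∃ l : List (Bgrp m), (∀ g ∈ l, g ∈ BGens m) ∧ l.foldr bmul (bone m) = β

lemma foldr_bmul_eq (l : List (Bgrp m)) (x : Bgrp m) :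
    l.foldr bmul x = bmul (l.foldr bmul (bone m)) x := by
  induction l with
  | nil => simp [bone_bmul]
  | cons g l ih => simp [List.foldr_cons, ih, bmul_assoc]

lemma Wd.bmul {β γ : Bgrp m} (hβ : Wd β) (hγ : Wd γ) : Wd (bmul β γ) := by
  obtain ⟨l1, hl1, e1⟩ := hβ
  obtain ⟨l2, hl2, e2⟩ := hγ
  refine ⟨l1 ++ l2, ?_, ?_⟩
  · intro g hg; rcases List.mem_append.1 hg with h | h
    exacts [hl1 g h, hl2 g h]
  · rw [List.foldr_append, e2, foldr_bmul_eq, e1]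

lemma Wd.gen {g : Bgrp m} (hg : g ∈ BGens m) : Wd g :=
  ⟨[g], by simpa using hg, by simp [bmul_bone]⟩

lemma Wd.one : Wd (bone m) := ⟨[], by simp, rfl⟩

lemma wd_adj_swap {i : ℕ} (h : i + 1 < m) :
    Wd ((Equiv.swap ⟨i, Nat.lt_of_succ_lt h⟩ ⟨i+1, h⟩, fun _ => false) : Bgrp m) :=
  Wd.gen (Or.inr ⟨i, h, rfl⟩)

lemma wd_swap_adj (x y : Fin m) (hxy : (x : ℕ) + 1 = (y : ℕ)) :
    Wd ((Equiv.swap x y, fun _ => false) : Bgrp m) := by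
  have h : (x : ℕ) + 1 < m := by have := y.isLt; omega
  have hx : x = ⟨(x:ℕ), Nat.lt_of_succ_lt h⟩ := Fin.ext rfl
  have hy : y = ⟨(x:ℕ)+1, h⟩ := Fin.ext (by simp [← hxy])
  rw [hx, hy]; exact wd_adj_swap h

lemma wd_swap_dist : ∀ (d : ℕ) (x y : Fin m), (x : ℕ) + 1 + d = (y : ℕ) →
    Wd ((Equiv.swap x y, fun _ => false) : Bgrp m) := by
  intro d
  induction d with
  | zero =>
    intro x y hxy
    exact wd_swap_adj x y (by omega)
  | succ d ih =>
    intro x y hxy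
    have hzm : (x : ℕ) + 1 + d < m := by have := y.isLt; omega
    set z : Fin m := ⟨(x:ℕ) + 1 + d, hzm⟩ with hz
    have h1 : Wd ((Equiv.swap x z, fun _ => false) : Bgrp m) := ih x z rfl
    have h2 : Wd ((Equiv.swap z y, fun _ => false) : Bgrp m) :=
      wd_swap_adj z y (by simp [hz]; omega)
    have hxz : x ≠ z := by
      intro hh; have := congrArg Fin.val hh; simp only [hz] at this; omega
    have hxy' : x ≠ y := by
      intro hh; have := congrArg Fin.val hh; omega
    have key : Equiv.swap x y = Equiv.swap z y * Equiv.swap x z * (Equiv.swap z y) := by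
      have : Equiv.swap ((Equiv.swap z y) x) ((Equiv.swap z y) z)
          = Equiv.swap z y * Equiv.swap x z * (Equiv.swap z y)⁻¹ :=
        Equiv.swap_apply_apply (Equiv.swap z y) x z
      rw [Equiv.swap_apply_of_ne_of_ne hxz hxy', Equiv.swap_apply_left, Equiv.swap_inv] at this
      rw [← this]
    rw [key]
    have := (h2.bmul h1).bmul h2
    rwa [bmul_perm, bmul_perm, mul_assoc] at this

lemma wd_swap {x y : Fin m} (hxy : x ≠ y) :
    Wd ((Equiv.swap x y, fun _ => false) : Bgrp m) := by
  rcases lt_or_gt_of_ne hxy with h | h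
  · have : (x:ℕ) < (y:ℕ) := h
    exact wd_swap_dist ((y:ℕ) - ((x:ℕ)+1)) x y (by omega)
  · have : (y:ℕ) < (x:ℕ) := h
    rw [Equiv.swap_comm]
    exact wd_swap_dist ((x:ℕ) - ((y:ℕ)+1)) y x (by omega)

lemma wd_perm (σ : Equiv.Perm (Fin m)) : Wd ((σ, fun _ => false) : Bgrp m) := by
  refine Equiv.Perm.swap_induction_on σ Wd.one ?_
  intro f x y hxy ih
  have := (wd_swap hxy).bmul ih
  rwa [bmul_perm] at this

lemma wd_tj (j : Fin m) : Wd ((1, fun i => decide (i = j)) : Bgrp m) := by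
  have hm : 0 < m := j.pos
  set z : Fin m := ⟨0, hm⟩ with hz
  have hs0 : Wd ((1, fun i => decide (i = z)) : Bgrp m) := Wd.gen (Or.inl ⟨hm, rfl⟩)
  by_cases hj : j = z
  · rw [hj]; exact hs0
  · have hw : Wd ((Equiv.swap z j, fun _ => false) : Bgrp m) := wd_swap (Ne.symm hj)
    have key : bmul (bmul (Equiv.swap z j, fun _ => false) (1, fun i => decide (i = z)))
        ((Equiv.swap z j, fun _ => false) : Bgrp m) = (1, fun i => decide (i = j)) := by
      unfold bmul
      refine Prod.ext ?_ ?_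
      · simp [Equiv.swap_mul_self]
      · funext i
        simp only [Bool.xor_false, Equiv.Perm.one_apply]
        have : (Equiv.swap z j) i = z ↔ i = j := by
          constructor
          · intro hh
            have := congrArg (Equiv.swap z j) hh
            rwa [Equiv.swap_apply_self, Equiv.swap_apply_left] at this
          · intro hh; rw [hh, Equiv.swap_apply_right]
        simp [this]
    rw [← key]
    exact (hw.bmul hs0).bmul hw

lemma wd_signs (s : Finset (Fin m)) : Wd ((1, fun i => decide (i ∈ s)) : Bgrp m) := by
  classical
  refine Finset.induction_on s ?_ ?_
  ·
    have : ((1, fun i => decide (i ∈ (∅ : Finset (Fin m)))) : Bgrp m) = bone m := by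
      unfold bone; refine Prod.ext rfl ?_; funext i; simp
    rw [this]; exact Wd.one
  · intro a s ha ih
    have key : bmul (1, fun i => decide (i = a)) ((1, fun i => decide (i ∈ s)) : Bgrp m)
        = (1, fun i => decide (i ∈ insert a s)) := by
      unfold bmul
      refine Prod.ext (by simp) ?_
      funext i
      simp only [Equiv.Perm.one_apply, Finset.mem_insert]
      by_cases h1 : i = a
      · subst h1; simp [ha]
      · by_cases h2 : i ∈ s <;> simp [h1, h2]
    rw [← key]
    exact (wd_tj a).bmul ih

lemma exists_word (β : Bgrp m) : Wd β := by
  classical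
  have key : bmul (β.1, fun _ => false)
      ((1, fun i => decide (i ∈ Finset.univ.filter (fun i => β.2 i = true))) : Bgrp m) = β := by
    unfold bmul
    refine Prod.ext (by simp) ?_
    funext i
    simp only [Bool.xor_false]
    by_cases h : β.2 i = true <;> simp [h]
  rw [← key]
  exact (wd_perm β.1).bmul (wd_signs _)

lemma pow_lenB (β : Bgrp m) : (-1 : ℤ) ^ lenB β = dSign β := by
  obtain ⟨l, hl, e⟩ := exists_word β
  have hne : {k | ∃ l : List (Bgrp m), l.length = k ∧ (∀ g ∈ l, g ∈ BGens m) ∧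
      l.foldr bmul (bone m) = β}.Nonempty := ⟨l.length, l, rfl, hl, e⟩
  have hmem := Nat.sInf_mem hne
  obtain ⟨l', hl'len, hl', e'⟩ := hmem
  rw [lenB, ← hl'len, ← dSign_foldr l' hl', e']

/-! ### `N1` and negative entries -/

lemma wdw_neg_iff (β : Bgrp m) (i : Fin m) : wdw β i < 0 ↔ β.2 i = true := by
  unfold wdw
  have : (0:ℤ) ≤ (β.1 i : ℤ) := Int.natCast_nonneg _
  cases h : β.2 i <;> simp <;> omega

lemma N1_filter (β : Bgrp m) : N1 β = (Finset.univ.filter (fun i => β.2 i = true)).card := by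
  unfold N1 NegB
  congr 1
  exact Finset.filter_congr (fun i _ => wdw_neg_iff β i)

lemma prod_sign_eq (β : Bgrp m) :
    (∏ i, (if β.2 i then (-1 : ℤ) else 1)) = (-1 : ℤ) ^ N1 β := by
  rw [Finset.prod_ite, Finset.prod_const, Finset.prod_const, one_pow, mul_one, N1_filter]

lemma dSign_eq (β : Bgrp m) : dSign β = (Equiv.Perm.sign β.1 : ℤ) * (-1 : ℤ) ^ N1 β := by
  rw [dSign, prod_sign_eq]

end Stmt13Aux
namespace Stmt13Aux

variable {n : ℕ}

/-! ### The pair-swapping involution on `B (2n)` -/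

/-- Sign of the window entry whose absolute value is `v+1`. -/
def vSign (β : Bgrp (2*n)) (v : ℕ) : Bool :=
  if h : v < 2*n then β.2 (β.1⁻¹ ⟨v, h⟩) else false

/-- The pair `{2k+1, 2k+2}` of absolute values carries mixed signs. -/
def PK (β : Bgrp (2*n)) (k : ℕ) : Prop :=
  2*k+1 < 2*n ∧ vSign β (2*k) ≠ vSign β (2*k+1)

instance (β : Bgrp (2*n)) : DecidablePred (PK β) := fun k => by
  unfold PK; infer_instance

lemma precLt_iff (s t : Bool) (x y : Fin (2*n)) :
    precLt ((if t then -1 else 1) * ((y : ℤ) + 1)) ((if s then -1 else 1) * ((x : ℤ) + 1)) ↔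
      ((t = true ∧ s = false) ∨ (t = s ∧ (y : ℕ) < (x : ℕ))) := by
  cases s <;> cases t <;> simp [precLt] <;> omega

lemma swap_val_lt_iff {a b u v : Fin (2*n)} (hab : (a : ℕ) + 1 = (b : ℕ))
    (h : ¬((u = a ∨ u = b) ∧ (v = a ∨ v = b))) :
    ((Equiv.swap a b v : Fin (2*n)) : ℕ) < ((Equiv.swap a b u : Fin (2*n)) : ℕ) ↔
      (v : ℕ) < (u : ℕ) := by
  rcases eq_or_ne v a with rfl | hva
  · have hu : u ≠ v ∧ u ≠ b := by tauto
    rw [Equiv.swap_apply_left, Equiv.swap_apply_of_ne_of_ne hu.1 hu.2]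
    have h1 : (u:ℕ) ≠ (v:ℕ) := fun hh => hu.1 (Fin.ext hh)
    have h2 : (u:ℕ) ≠ (b:ℕ) := fun hh => hu.2 (Fin.ext hh)
    omega
  · rcases eq_or_ne v b with rfl | hvb
    · have hu : u ≠ a ∧ u ≠ v := by tauto
      rw [Equiv.swap_apply_right, Equiv.swap_apply_of_ne_of_ne hu.1 hu.2]
      have h1 : (u:ℕ) ≠ (a:ℕ) := fun hh => hu.1 (Fin.ext hh)
      have h2 : (u:ℕ) ≠ (v:ℕ) := fun hh => hu.2 (Fin.ext hh)
      omega
    · rw [Equiv.swap_apply_of_ne_of_ne hva hvb]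
      have h1 : (v:ℕ) ≠ (a:ℕ) := fun hh => hva (Fin.ext hh)
      have h2 : (v:ℕ) ≠ (b:ℕ) := fun hh => hvb (Fin.ext hh)
      rcases eq_or_ne u a with rfl | hua
      · rw [Equiv.swap_apply_left]; omega
      · rcases eq_or_ne u b with rfl | hub
        · rw [Equiv.swap_apply_right]; omega
        · rw [Equiv.swap_apply_of_ne_of_ne hua hub]

lemma DesB_phi (β : Bgrp (2*n)) {a b : Fin (2*n)} (hab : (a : ℕ) + 1 = (b : ℕ))
    (hne : β.2 (β.1⁻¹ a) ≠ β.2 (β.1⁻¹ b)) :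
    DesB ((Equiv.swap a b * β.1, β.2) : Bgrp (2*n)) = DesB β := by
  unfold DesB
  apply Finset.filter_congr
  intro i hi
  rw [Finset.mem_range] at hi
  have hi1 : i < 2*n := by omega
  have hi2 : i+1 < 2*n := by omega
  simp only [wdwN, dif_pos hi1, dif_pos hi2, wdw, Equiv.Perm.mul_apply]
  rw [precLt_iff, precLt_iff]
  set s := β.2 ⟨i, hi1⟩ with hs
  set t := β.2 ⟨i+1, hi2⟩ with ht
  set u := β.1 ⟨i, hi1⟩ with hu
  set v := β.1 ⟨i+1, hi2⟩ with hv
  by_cases hts : t = s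
  · have hboth : ¬((u = a ∨ u = b) ∧ (v = a ∨ v = b)) := by
      rintro ⟨hu', hv'⟩
      have huv : u ≠ v := by
        intro hh
        have := β.1.injective hh
        exact absurd (congrArg Fin.val this) (by simp)
      have hst : s ≠ t := by
        rcases hu' with h1 | h1 <;> rcases hv' with h2 | h2
        · exact absurd (h1.trans h2.symm) huv
        · have e1 : β.1⁻¹ a = ⟨i, hi1⟩ := by rw [← h1]; exact β.1.symm_apply_apply _
          have e2 : β.1⁻¹ b = ⟨i+1, hi2⟩ := by rw [← h2]; exact β.1.symm_apply_apply _
          rw [e1, e2] at hne; exact hne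
        · have e1 : β.1⁻¹ b = ⟨i, hi1⟩ := by rw [← h1]; exact β.1.symm_apply_apply _
          have e2 : β.1⁻¹ a = ⟨i+1, hi2⟩ := by rw [← h2]; exact β.1.symm_apply_apply _
          rw [e1, e2] at hne; exact (Ne.symm hne)
        · exact absurd (h1.trans h2.symm) huv
      exact hst (hts.symm)
    rw [swap_val_lt_iff hab hboth]
  · simp [hts]

lemma N1_phi (β : Bgrp (2*n)) (a b : Fin (2*n)) :
    N1 ((Equiv.swap a b * β.1, β.2) : Bgrp (2*n)) = N1 β := by
  rw [N1_filter, N1_filter]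

lemma fmaj_phi (β : Bgrp (2*n)) {a b : Fin (2*n)} (hab : (a : ℕ) + 1 = (b : ℕ))
    (hne : β.2 (β.1⁻¹ a) ≠ β.2 (β.1⁻¹ b)) :
    fmaj ((Equiv.swap a b * β.1, β.2) : Bgrp (2*n)) = fmaj β := by
  unfold fmaj majB
  rw [DesB_phi β hab hne, N1_phi]

lemma dSign_phi (β : Bgrp (2*n)) {a b : Fin (2*n)} (hab : (a : ℕ) + 1 = (b : ℕ)) :
    dSign ((Equiv.swap a b * β.1, β.2) : Bgrp (2*n)) = - dSign β := by
  have hne : a ≠ b := fun hh => absurd (congrArg Fin.val hh) (by omega)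
  rw [dSign_eq, dSign_eq, map_mul, Equiv.Perm.sign_swap hne, N1_phi]
  push_cast
  ring

end Stmt13Aux
namespace Stmt13Aux

variable {n : ℕ}

lemma prod_range_even {M : Type*} [CommMonoid M] (g : ℕ → M) (k : ℕ) :
    ∏ v ∈ Finset.range (2*k), g v = ∏ j ∈ Finset.range k, (g (2*j) * g (2*j+1)) := by
  induction k with
  | zero => simp
  | succ k ih =>
    have h2 : 2*(k+1) = (2*k+1)+1 := by ring
    rw [h2, Finset.prod_range_succ, Finset.prod_range_succ, ih, Finset.prod_range_succ,
      mul_assoc]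

lemma exists_PK (β : Bgrp (2*n)) (hodd : N1 β % 2 = 1) : ∃ k, PK β k := by
  by_contra hcon
  push_neg at hcon
  have key : (-1 : ℤ) ^ N1 β = 1 := by
    have e1 : (-1 : ℤ) ^ N1 β = ∏ i, (if β.2 i then (-1 : ℤ) else 1) :=
      (prod_sign_eq β).symm
    have e2 : (∏ i, (if β.2 i then (-1 : ℤ) else 1))
        = ∏ i, (if β.2 (β.1⁻¹ i) then (-1 : ℤ) else 1) :=
      (Equiv.prod_comp β.1⁻¹ (fun j => (if β.2 j then (-1 : ℤ) else 1))).symm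
    have e3 : (∏ i, (if β.2 (β.1⁻¹ i) then (-1 : ℤ) else 1))
        = ∏ v ∈ Finset.range (2*n), (if vSign β v then (-1 : ℤ) else 1) := by
      rw [← Fin.prod_univ_eq_prod_range (fun v => (if vSign β v then (-1 : ℤ) else 1)) (2*n)]
      refine Finset.prod_congr rfl ?_
      intro i _
      congr 1
      unfold vSign
      rw [dif_pos i.isLt]
    rw [e1, e2, e3, prod_range_even]
    refine Finset.prod_eq_one ?_
    intro j hj
    rw [Finset.mem_range] at hj
    have hb : 2*j+1 < 2*n := by omega
    have := hcon j
    unfold PK at this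
    push_neg at this
    have heq : vSign β (2*j) = vSign β (2*j+1) := this hb
    rw [heq]
    cases vSign β (2*j+1) <;> norm_num
  have : Odd (N1 β) := Nat.odd_iff.2 hodd
  rw [this.neg_one_pow] at key
  norm_num at key

/-- The involution: swap the values of the first mixed-sign pair. -/
def tau (β : Bgrp (2*n)) (hE : ∃ k, PK β k) : Bgrp (2*n) :=
  (Equiv.swap ⟨2*Nat.find hE, by have := (Nat.find_spec hE).1; omega⟩
      ⟨2*Nat.find hE+1, (Nat.find_spec hE).1⟩ * β.1, β.2)

lemma tau_hne (β : Bgrp (2*n)) (hE : ∃ k, PK β k) :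
    β.2 (β.1⁻¹ (⟨2*Nat.find hE, by have := (Nat.find_spec hE).1; omega⟩ : Fin (2*n)))
      ≠ β.2 (β.1⁻¹ (⟨2*Nat.find hE+1, (Nat.find_spec hE).1⟩ : Fin (2*n))) := by
  have h := (Nat.find_spec hE).2
  unfold vSign at h
  rwa [dif_pos, dif_pos] at h

lemma fmaj_tau (β : Bgrp (2*n)) (hE : ∃ k, PK β k) : fmaj (tau β hE) = fmaj β :=
  fmaj_phi β (by simp) (tau_hne β hE)

lemma dSign_tau (β : Bgrp (2*n)) (hE : ∃ k, PK β k) : dSign (tau β hE) = - dSign β :=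
  dSign_phi β (by simp)

lemma vSign_tau (β : Bgrp (2*n)) (hE : ∃ k, PK β k) (v : ℕ) (hv : v < 2*n) :
    vSign (tau β hE) v =
      (if v = 2*Nat.find hE then vSign β (2*Nat.find hE+1)
       else if v = 2*Nat.find hE+1 then vSign β (2*Nat.find hE)
       else vSign β v) := by
  have hb := (Nat.find_spec hE).1
  set k := Nat.find hE
  set a : Fin (2*n) := ⟨2*k, by omega⟩
  set b : Fin (2*n) := ⟨2*k+1, hb⟩
  have hinv : ∀ w : Fin (2*n), (tau β hE).1⁻¹ w = β.1⁻¹ (Equiv.swap a b w) := by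
    intro w
    show (Equiv.swap a b * β.1)⁻¹ w = _
    rw [mul_inv_rev, Equiv.swap_inv, Equiv.Perm.mul_apply]
  have htau2 : (tau β hE).2 = β.2 := rfl
  unfold vSign
  rw [dif_pos hv, htau2, hinv]
  by_cases h1 : v = 2*k
  · have : (⟨v, hv⟩ : Fin (2*n)) = a := Fin.ext h1
    rw [this, Equiv.swap_apply_left, if_pos h1, dif_pos hb]
  · by_cases h2 : v = 2*k+1
    · have : (⟨v, hv⟩ : Fin (2*n)) = b := Fin.ext h2
      rw [this, Equiv.swap_apply_right, if_neg h1, if_pos h2, dif_pos (by omega : 2*k < 2*n)]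
    · have ha' : (⟨v, hv⟩ : Fin (2*n)) ≠ a := Fin.ne_of_val_ne h1
      have hb' : (⟨v, hv⟩ : Fin (2*n)) ≠ b := Fin.ne_of_val_ne h2
      rw [Equiv.swap_apply_of_ne_of_ne ha' hb', if_neg h1, if_neg h2, dif_pos hv]

lemma PK_tau (β : Bgrp (2*n)) (hE : ∃ k, PK β k) (k : ℕ) : PK (tau β hE) k ↔ PK β k := by
  unfold PK
  by_cases hb : 2*k+1 < 2*n
  · have h1 : 2*k < 2*n := by omega
    rw [vSign_tau β hE (2*k) h1, vSign_tau β hE (2*k+1) hb]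
    by_cases hk : k = Nat.find hE
    · subst hk
      rw [if_pos rfl, if_neg (by omega), if_pos rfl]
      constructor
      · rintro ⟨hh, hne⟩; exact ⟨hh, hne.symm⟩
      · rintro ⟨hh, hne⟩; exact ⟨hh, hne.symm⟩
    · rw [if_neg (by omega), if_neg (by omega), if_neg (by omega), if_neg (by omega)]
  · constructor
    · rintro ⟨hh, _⟩; exact absurd hh hb
    · rintro ⟨hh, _⟩; exact absurd hh hb

lemma find_tau (β : Bgrp (2*n)) (hE : ∃ k, PK β k) (hE' : ∃ k, PK (tau β hE) k) :
    Nat.find hE' = Nat.find hE := by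
  apply le_antisymm
  · exact Nat.find_le ((PK_tau β hE _).2 (Nat.find_spec hE))
  · exact Nat.find_le ((PK_tau β hE _).1 (Nat.find_spec hE'))

lemma tau_tau (β : Bgrp (2*n)) (hE : ∃ k, PK β k) (hE' : ∃ k, PK (tau β hE) k) :
    tau (tau β hE) hE' = β := by
  have hf := find_tau β hE hE'
  rw [tau]
  refine Prod.ext ?_ rfl
  show _ = β.1
  have ha : (⟨2*Nat.find hE', by have := (Nat.find_spec hE').1; omega⟩ : Fin (2*n))
      = ⟨2*Nat.find hE, by have := (Nat.find_spec hE).1; omega⟩ := Fin.ext (by simp [hf])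
  have hb : (⟨2*Nat.find hE'+1, (Nat.find_spec hE').1⟩ : Fin (2*n))
      = ⟨2*Nat.find hE+1, (Nat.find_spec hE).1⟩ := Fin.ext (by simp [hf])
  rw [ha, hb]
  show Equiv.swap _ _ * ((Equiv.swap _ _ * β.1)) = β.1
  rw [← mul_assoc, Equiv.swap_mul_self, one_mul]

lemma tau_ne (β : Bgrp (2*n)) (hE : ∃ k, PK β k) : tau β hE ≠ β := by
  intro hh
  have h1 := congrArg Prod.fst hh
  have h2 : Equiv.swap (⟨2*Nat.find hE, by have := (Nat.find_spec hE).1; omega⟩ : Fin (2*n))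
      ⟨2*Nat.find hE+1, (Nat.find_spec hE).1⟩ = 1 := by
    have h3 : Equiv.swap (⟨2*Nat.find hE, by have := (Nat.find_spec hE).1; omega⟩ : Fin (2*n))
        ⟨2*Nat.find hE+1, (Nat.find_spec hE).1⟩ * β.1 = 1 * β.1 := by
      rw [one_mul]; exact h1
    exact mul_right_cancel h3
  rw [Equiv.swap_eq_one_iff] at h2
  exact absurd (congrArg Fin.val h2) (by simp)

end Stmt13Aux

/-- The odd part of the signed Mahonian polynomial of `B_{2n}` vanishes. -/
theorem stmt13 (n : ℕ) (hn : 0 < n) :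
    ∑ β ∈ (univ : Finset (Bgrp (2*n))).filter (fun β => fmaj β % 2 = 1),
      (-1 : Polynomial ℤ) ^ lenB β * X ^ fmaj β = 0 := by
  classical
  have hmem : ∀ β : Bgrp (2*n),
      β ∈ (univ : Finset (Bgrp (2*n))).filter (fun β => fmaj β % 2 = 1) →
      ∃ k, Stmt13Aux.PK β k := by
    intro β hβ
    rw [Finset.mem_filter] at hβ
    apply Stmt13Aux.exists_PK
    have h := hβ.2
    unfold fmaj at h
    omega
  have h2 : ∀ γ : Bgrp (2*n), (-1 : Polynomial ℤ) ^ lenB γ = C (Stmt13Aux.dSign γ) := by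
    intro γ
    rw [← Stmt13Aux.pow_lenB, map_pow, map_neg, map_one]
  refine Finset.sum_involution (fun β hβ => Stmt13Aux.tau β (hmem β hβ)) ?_ ?_ ?_ ?_
  · intro β hβ
    simp only [h2]
    rw [Stmt13Aux.fmaj_tau β (hmem β hβ), Stmt13Aux.dSign_tau β (hmem β hβ), map_neg]
    ring
  · intro β hβ _
    exact Stmt13Aux.tau_ne β _
  · intro β hβ
    rw [Finset.mem_filter]
    exact ⟨Finset.mem_univ _, by
      rw [Stmt13Aux.fmaj_tau β (hmem β hβ)]
      exact (Finset.mem_filter.1 hβ).2⟩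
  · intro β hβ
    exact Stmt13Aux.tau_tau β _ _
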